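/- Let I be a finite nonempty index set with energies E_i ≥ 0 (Σ_i E_i > 0), gates g_i with 0 < g_min ≤ g_i ≤ g_max, weights w_i = g_i·E_i, residuals e_i ∈ ℝ, tolerance Δ > 0, normalized weighted residual L = (Σ_i w_i e_i²)/(Σ_i w_i), and tilted-line energy ratio C_rot = (Σ_{i : |e_i| ≤ Δ} E_i)/(Σ_i E_i). Let p = (p_1, …, p_{N_r}) be a probability vector over N_r ≥ 2 rings with some p_{k₀} ≥ 1 − ε, 0 ≤ ε ≤ (N_r−1)/N_r, and set C_ring = 1 − H(p)/log N_r where H(p) = −Σ_k p_k log p_k. Then the rotation loss L_rot := 1 − (C_ring + C_rot)/2 satisfies L_rot ≤ (g_max/(2·g_min)) · Δ^{−2} · L + (h(ε) + ε·log(N_r−1))/(2·log N_r), where h(ε) = −ε log ε − (1−ε) log(1−ε). -/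

import Mathlib

open Real Finset

private lemma fano_mono (c : ℝ) (hc1 : c < 1) :
    MonotoneOn (fun x : ℝ => negMulLog x + negMulLog (1 - x)
        + x * (Real.log c - Real.log (1 - c))) (Set.Icc 0 c) := by
  have hint : interior (Set.Icc (0:ℝ) c) = Set.Ioo 0 c := interior_Icc
  apply monotoneOn_of_deriv_nonneg (convex_Icc 0 c)
  · fun_prop
  · rw [hint]
    intro x hx
    have hx0 : x ≠ 0 := ne_of_gt hx.1
    have hx1 : (1 : ℝ) - x ≠ 0 := by
      have := hx.2; intro h; nlinarith
    apply DifferentiableAt.differentiableWithinAt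
    have d1 : DifferentiableAt ℝ negMulLog x := differentiableAt_negMulLog hx0
    have d2 : DifferentiableAt ℝ (fun y : ℝ => negMulLog (1 - y)) x :=
      (differentiableAt_negMulLog hx1).comp x (by fun_prop)
    fun_prop
  · rw [hint]
    intro x hx
    have hx0 : (0:ℝ) < x := hx.1
    have hxc : x < c := hx.2
    have hx1 : (0 : ℝ) < 1 - x := by nlinarith
    have h1 : HasDerivAt negMulLog (-Real.log x - 1) x := hasDerivAt_negMulLog hx0.ne'
    have hin : HasDerivAt (fun y : ℝ => 1 - y) (-1) x := by
      simpa using (hasDerivAt_id x).const_sub 1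
    have h2 : HasDerivAt (fun y : ℝ => negMulLog (1 - y))
        ((-Real.log (1 - x) - 1) * (-1)) x :=
      (hasDerivAt_negMulLog hx1.ne').comp x hin
    have h3 : HasDerivAt (fun y : ℝ => y * (Real.log c - Real.log (1 - c)))
        (Real.log c - Real.log (1 - c)) x := by
      simpa using (hasDerivAt_id x).mul_const (Real.log c - Real.log (1 - c))
    have htot := (h1.add h2).add h3
    have htot' : HasDerivAt (fun y : ℝ => negMulLog y + negMulLog (1 - y) + y * (Real.log c - Real.log (1 - c))) _ x := htot
    rw [htot'.deriv]
    have hlog : Real.log x + Real.log (1 - c) ≤ Real.log (1 - x) + Real.log c := by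
      rw [← Real.log_mul hx0.ne' (by nlinarith), ← Real.log_mul (by nlinarith) (by nlinarith)]
      apply Real.log_le_log (mul_pos hx0 (by linarith))
      nlinarith
    linarith

private lemma fano_entropy (Nr : ℕ) (hNr : 2 ≤ Nr)
    (p : Fin Nr → ℝ) (hp : ∀ k, 0 ≤ p k) (hsum : ∑ k, p k = 1)
    (ε : ℝ) (hε0 : 0 ≤ ε) (hεub : ε ≤ ((Nr : ℝ) - 1) / Nr)
    (k₀ : Fin Nr) (hk₀ : 1 - ε ≤ p k₀) :
    ∑ k, negMulLog (p k)
      ≤ (negMulLog ε + negMulLog (1 - ε)) + ε * Real.log ((Nr : ℝ) - 1) := by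
  set N : ℝ := (Nr : ℝ) with hN
  have hN2 : (2 : ℝ) ≤ N := by rw [hN]; exact_mod_cast hNr
  have hN0 : (0 : ℝ) < N := by linarith
  have hN1 : (0 : ℝ) < N - 1 := by linarith
  set c : ℝ := (N - 1) / N with hc
  have hc1 : c < 1 := by rw [hc, div_lt_one hN0]; linarith
  have hc0 : 0 < c := by positivity
  have h1c : 1 - c = N⁻¹ := by field_simp [hc]; rw [sub_mul, hc, div_mul_cancel₀ _ hN0.ne']; ring
  have hKey : Real.log c - Real.log (1 - c) = Real.log (N - 1) := by
    rw [h1c, hc, Real.log_div hN1.ne' hN0.ne', Real.log_inv]; ring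
  -- tail set
  set t : Finset (Fin Nr) := univ.erase k₀ with ht
  have hcard : (t.card : ℝ) = N - 1 := by
    rw [ht, card_erase_of_mem (mem_univ _), card_univ, Fintype.card_fin]
    push_cast [Nat.cast_sub (by omega : 1 ≤ Nr)]
    simp [hN]
  set q : ℝ := 1 - p k₀ with hq
  have hqsum : ∑ k ∈ t, p k = q := by
    have := sum_erase_add univ p (mem_univ k₀)
    rw [← ht] at this
    rw [hq]; linarith [hsum ▸ this]
  have hq0 : 0 ≤ q := by
    rw [hq]; have : p k₀ ≤ ∑ k, p k := single_le_sum (fun k _ => hp k) (mem_univ k₀)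
    rw [hsum] at this; linarith
  have hqε : q ≤ ε := by rw [hq]; linarith
  -- Jensen on the tail
  have hJ : ∑ k ∈ t, negMulLog (p k) ≤ negMulLog q + q * Real.log (N - 1) := by
    have hm : (0:ℝ) < N - 1 := hN1
    have hconc := concaveOn_negMulLog.le_map_sum (t := t)
      (w := fun _ => (N - 1)⁻¹) (p := p)
      (fun _ _ => by positivity)
      (by rw [sum_const, nsmul_eq_mul, hcard]; field_simp)
      (fun k _ => hp k)
    simp only [smul_eq_mul, ← mul_sum] at hconc
    rw [hqsum] at hconc
    have h2 : ∑ k ∈ t, negMulLog (p k) ≤ (N - 1) * negMulLog ((N - 1)⁻¹ * q) := by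
      calc ∑ k ∈ t, negMulLog (p k)
          = (N - 1) * ((N - 1)⁻¹ * ∑ k ∈ t, negMulLog (p k)) := by field_simp
        _ ≤ (N - 1) * negMulLog ((N - 1)⁻¹ * q) := by
            apply mul_le_mul_of_nonneg_left hconc hm.le
    refine h2.trans ?_
    rcases eq_or_lt_of_le hq0 with h | hqpos
    · simp [← h]
    · have heq : (N - 1) * negMulLog ((N - 1)⁻¹ * q)
          = negMulLog q + q * Real.log (N - 1) := by
        rw [negMulLog, Real.log_mul (inv_ne_zero hm.ne') hqpos.ne', Real.log_inv,
          negMulLog]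
        field_simp; ring
      linarith [heq.le]
  -- assemble
  have hsplit : ∑ k, negMulLog (p k) = negMulLog (p k₀) + ∑ k ∈ t, negMulLog (p k) := by
    rw [ht, (sum_erase_add univ _ (mem_univ k₀)).symm]; ring
  have hpk : p k₀ = 1 - q := by rw [hq]; ring
  have hεc : ε ≤ c := hεub
  have hmono := fano_mono c hc1 (Set.mem_Icc.2 ⟨hq0, hqε.trans hεc⟩)
    (Set.mem_Icc.2 ⟨hε0, hεc⟩) hqε
  simp only [hKey] at hmono
  calc ∑ k, negMulLog (p k)
      = negMulLog (p k₀) + ∑ k ∈ t, negMulLog (p k) := hsplit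
    _ ≤ negMulLog (1 - q) + (negMulLog q + q * Real.log (N - 1)) := by
        rw [hpk]; linarith
    _ = negMulLog q + negMulLog (1 - q) + q * Real.log (N - 1) := by ring
    _ ≤ negMulLog ε + negMulLog (1 - ε) + ε * Real.log (N - 1) := hmono

/-- Rotation surrogate upper-bounds the unified rotational-slice residual
(finite-data, windowing- and interpolation-free version). -/
theorem rotation_surrogate_le_unified_residual
    {I : Type*} [Fintype I] [Nonempty I]
    (E g e : I → ℝ) (gmin gmax Δ : ℝ)
    (hE : ∀ i, 0 ≤ E i) (hEpos : 0 < ∑ i, E i)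
    (hgmin : 0 < gmin)
    (hglb : ∀ i, gmin ≤ g i) (hgub : ∀ i, g i ≤ gmax)
    (w : I → ℝ) (hw : ∀ i, w i = g i * E i)
    (hΔ : 0 < Δ)
    (L : ℝ) (hL : L = (∑ i, w i * (e i) ^ 2) / (∑ i, w i))
    (Crot : ℝ)
    (hCrot : Crot = (∑ i ∈ univ.filter (fun i => |e i| ≤ Δ), E i) / (∑ i, E i))
    (Nr : ℕ) (hNr : 2 ≤ Nr)
    (p : Fin Nr → ℝ) (hp : ∀ k, 0 ≤ p k) (hsum : ∑ k, p k = 1)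
    (ε : ℝ) (hε0 : 0 ≤ ε) (hεub : ε ≤ ((Nr : ℝ) - 1) / Nr)
    (k₀ : Fin Nr) (hk₀ : 1 - ε ≤ p k₀)
    (Cring : ℝ) (hCring : Cring = 1 - (∑ k, negMulLog (p k)) / Real.log Nr) :
    1 - (Cring + Crot) / 2
      ≤ (gmax / (2 * gmin)) * (Δ ^ 2)⁻¹ * L
        + ((negMulLog ε + negMulLog (1 - ε)) + ε * Real.log ((Nr : ℝ) - 1))
          / (2 * Real.log Nr) := by
  set S := ∑ i, E i with hS
  set W := ∑ i, w i with hW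
  set T := ∑ i, w i * (e i) ^ 2 with hT
  have hwnn : ∀ i, gmin * E i ≤ w i := fun i => by
    rw [hw i]; exact mul_le_mul_of_nonneg_right (hglb i) (hE i)
  have hw0 : ∀ i, 0 ≤ w i := fun i =>
    le_trans (mul_nonneg hgmin.le (hE i)) (hwnn i)
  have hWpos : 0 < W := by
    have : gmin * S ≤ W := by
      rw [hS, hW, mul_sum]; exact sum_le_sum fun i _ => hwnn i
    nlinarith
  have hWub : W ≤ gmax * S := by
    rw [hS, hW, mul_sum]
    refine sum_le_sum fun i _ => ?_
    rw [hw i]; exact mul_le_mul_of_nonneg_right (hgub i) (hE i)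
  have hT0 : 0 ≤ T := sum_nonneg fun i _ => mul_nonneg (hw0 i) (sq_nonneg _)
  have hL0 : 0 ≤ L := by rw [hL]; positivity
  set B : Finset I := univ.filter (fun i => ¬ |e i| ≤ Δ) with hB
  have hsplit : (∑ i ∈ univ.filter (fun i => |e i| ≤ Δ), E i) + ∑ i ∈ B, E i = S :=
    sum_filter_add_sum_filter_not univ _ E
  have hBle : gmin * Δ ^ 2 * ∑ i ∈ B, E i ≤ T := by
    have h1 : gmin * Δ ^ 2 * ∑ i ∈ B, E i ≤ ∑ i ∈ B, w i * (e i) ^ 2 := by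
      rw [mul_sum]
      refine sum_le_sum fun i hi => ?_
      have hib : ¬ |e i| ≤ Δ := (mem_filter.1 hi).2
      have h2 : Δ ^ 2 ≤ (e i) ^ 2 := by
        nlinarith [abs_nonneg (e i), sq_abs (e i), not_le.1 hib]
      rw [hw i]
      nlinarith [hE i, hglb i, mul_le_mul_of_nonneg_right (hglb i) (hE i),
        mul_le_mul_of_nonneg_left h2 (mul_nonneg hgmin.le (hE i)), sq_nonneg (e i)]
    exact h1.trans (sum_le_sum_of_subset_of_nonneg (filter_subset _ _)
      (fun i _ _ => mul_nonneg (hw0 i) (sq_nonneg _)))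
  have hTeq : T = L * W := by rw [hL]; field_simp
  have key1 : 1 - Crot ≤ 2 * ((gmax / (2 * gmin)) * (Δ ^ 2)⁻¹ * L) := by
    have h1C : 1 - Crot = (∑ i ∈ B, E i) / S := by
      rw [hCrot]; field_simp; linarith
    rw [h1C, div_le_iff₀ hEpos]
    have hchain : gmin * Δ ^ 2 * ∑ i ∈ B, E i ≤ L * (gmax * S) := by
      calc gmin * Δ ^ 2 * ∑ i ∈ B, E i ≤ T := hBle
        _ = L * W := hTeq
        _ ≤ L * (gmax * S) := mul_le_mul_of_nonneg_left hWub hL0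
    have hpos : (0:ℝ) < gmin * Δ ^ 2 := by positivity
    have heq : 2 * ((gmax / (2 * gmin)) * (Δ ^ 2)⁻¹ * L) * S
        = L * (gmax * S) / (gmin * Δ ^ 2) := by
      field_simp
    rw [heq, le_div_iff₀ hpos]
    nlinarith [hchain]
  have hlogNr : 0 < Real.log Nr := Real.log_pos (by exact_mod_cast hNr.trans_lt' one_lt_two)
  have hH := fano_entropy Nr hNr p hp hsum ε hε0 hεub k₀ hk₀
  have key2 : 1 - Cring
      ≤ 2 * (((negMulLog ε + negMulLog (1 - ε)) + ε * Real.log ((Nr : ℝ) - 1))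
          / (2 * Real.log Nr)) := by
    rw [hCring, sub_sub_cancel]
    have h2 : 2 * (((negMulLog ε + negMulLog (1 - ε)) + ε * Real.log ((Nr : ℝ) - 1))
          / (2 * Real.log Nr))
        = ((negMulLog ε + negMulLog (1 - ε)) + ε * Real.log ((Nr : ℝ) - 1))
          / Real.log Nr := by
      field_simp
    rw [h2]
    gcongr
  linarith
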